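/- Let λ be a prefix-free code on alphabet A with distribution p and maximal codeword length l, and let π_λ be the randomized-padding distribution on {0,1}^l. Then the min-entropy of π_λ equals h_min(π_λ) = l − max_i (|λ(a_i)| − log₂(1/p(a_i))). -/

import Mathlib

open Real Finset

/-- A binary code is prefix-free if it is injective and no codeword is a prefix of
another codeword. -/
def PrefixFree {A : Type*} (lam : A → List Bool) : Prop :=
  Function.Injective lam ∧ ∀ a b : A, a ≠ b → ¬ (lam a <+: lam b)

/-- The randomized-padding distribution `π_λ` on `{0,1}^l`. -/
noncomputable def piDist {L : ℕ} (p : Fin L → ℝ) (lam : Fin L → List Bool) (l : ℕ)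
    (y : Fin l → Bool) : ℝ :=
  ∑ i, if lam i <+: List.ofFn y then p i * (1 / 2) ^ (l - (lam i).length) else 0

/-- Min-entropy of a distribution on a finite nonempty type:
`h_min(π) = -log₂ max_y π(y)`. -/
noncomputable def minEntropy {S : Type*} [Fintype S] [Nonempty S] (pi : S → ℝ) : ℝ :=
  - Real.logb 2 (Finset.univ.sup' Finset.univ_nonempty pi)

/-- the min-entropy of the randomized-padding distribution equals
`h_min(π_λ) = l − max_i (|λ(a_i)| − log₂(1/p(a_i)))`. -/
theorem piDist_min_entropy {L : ℕ} (hL : 0 < L) (p : Fin L → ℝ)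
    (lam : Fin L → List Bool)
    (hpos : ∀ i, 0 < p i) (hsum : ∑ i, p i = 1)
    (hpf : PrefixFree lam) (l : ℕ)
    (hlen : ∀ i, (lam i).length ≤ l)
    (hmax : ∃ i, (lam i).length = l) :
    minEntropy (piDist p lam l) =
      (l : ℝ) - Finset.univ.sup' ⟨⟨0, hL⟩, Finset.mem_univ _⟩
        (fun i : Fin L => ((lam i).length : ℝ) - Real.logb 2 (1 / p i)) := by
  classical
  have hne : (univ : Finset (Fin L)).Nonempty := ⟨⟨0, hL⟩, mem_univ _⟩
  set t : Fin L → ℝ := fun i => p i * (1 / 2) ^ (l - (lam i).length) with ht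
  have htpos : ∀ i, 0 < t i := fun i => mul_pos (hpos i) (pow_pos (by norm_num) _)
  -- Step 1: every value of piDist is at most sup' t
  have h1 : ∀ y : Fin l → Bool, piDist p lam l y ≤ univ.sup' hne t := by
    intro y
    unfold piDist
    by_cases hex : ∃ i, lam i <+: List.ofFn y
    · obtain ⟨i, hi⟩ := hex
      have hrw : ∀ j : Fin L,
          (if lam j <+: List.ofFn y then p j * (1 / 2) ^ (l - (lam j).length) else 0)
            = if j = i then t j else 0 := by
        intro j
        by_cases hj : lam j <+: List.ofFn y
        · have hji : j = i := by
            by_contra hji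
            rcases List.prefix_or_prefix_of_prefix hj hi with h | h
            · exact hpf.2 j i hji h
            · exact hpf.2 i j (Ne.symm hji) h
          subst hji; simp [hj, ht]
        · have : j ≠ i := by rintro rfl; exact hj hi
          simp [hj, this]
      rw [Finset.sum_congr rfl (fun j _ => hrw j), Finset.sum_ite_eq' univ i t]
      simp only [mem_univ, if_true]
      exact Finset.le_sup' t (mem_univ i)
    · push_neg at hex
      have : ∀ j : Fin L,
          (if lam j <+: List.ofFn y then p j * (1 / 2) ^ (l - (lam j).length) else 0) = 0 := by
        intro j; simp [hex j]
      rw [Finset.sum_congr rfl (fun j _ => this j), Finset.sum_const_zero]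
      exact le_trans (htpos ⟨0, hL⟩).le (Finset.le_sup' t (mem_univ _))
  -- Step 2: every t i is attained by piDist at some y
  have h2 : ∀ i : Fin L, ∃ y : Fin l → Bool, piDist p lam l y = t i := by
    intro i
    set full : List Bool := lam i ++ List.replicate (l - (lam i).length) false with hfulldef
    have hfull : full.length = l := by
      have := hlen i
      simp only [hfulldef, List.length_append, List.length_replicate]
      omega
    refine ⟨fun k => full[(k : ℕ)]'(by rw [hfull]; exact k.isLt), ?_⟩
    have hofn : List.ofFn (fun k : Fin l => full[(k : ℕ)]'(by rw [hfull]; exact k.isLt)) = full := by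
      apply List.ext_getElem
      · simp [hfull]
      · intro n h1' h2'
        simp [List.getElem_ofFn]
    unfold piDist
    rw [Finset.sum_eq_single_of_mem i (mem_univ i)]
    · rw [if_pos]
      rw [hofn]
      exact List.prefix_append _ _
    · intro j _ hji
      rw [if_neg]
      rw [hofn]
      intro hj
      have hi' : lam i <+: full := List.prefix_append _ _
      rcases List.prefix_or_prefix_of_prefix hj hi' with h | h
      · exact hpf.2 j i hji h
      · exact hpf.2 i j (Ne.symm hji) h
  -- Step 3: sup' piDist = sup' t
  have hsup : (univ : Finset (Fin l → Bool)).sup' Finset.univ_nonempty (piDist p lam l)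
      = univ.sup' hne t := by
    apply le_antisymm
    · exact Finset.sup'_le _ _ (fun y _ => h1 y)
    · apply Finset.sup'_le
      intro i _
      obtain ⟨y, hy⟩ := h2 i
      rw [← hy]
      exact Finset.le_sup' _ (mem_univ y)
  -- Step 4: logb of t i
  have hlogt : ∀ i : Fin L, Real.logb 2 (t i)
      = ((lam i).length : ℝ) - Real.logb 2 (1 / p i) - l := by
    intro i
    have hp : p i ≠ 0 := (hpos i).ne'
    have hpow : ((1 : ℝ) / 2) ^ (l - (lam i).length) ≠ 0 := by positivity
    rw [ht]
    rw [Real.logb_mul hp hpow, Real.logb_pow]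
    have h12 : Real.logb 2 ((1 : ℝ) / 2) = -1 := by
      rw [one_div, Real.logb_inv, Real.logb_self_eq_one] <;> norm_num
    rw [h12, one_div, Real.logb_inv, Nat.cast_sub (hlen i)]
    ring
  -- Step 5: logb of sup' t = sup' of logb ∘ t
  obtain ⟨i0, _, hi0⟩ := Finset.exists_mem_eq_sup' hne t
  have hlogsup : Real.logb 2 (univ.sup' hne t)
      = univ.sup' hne (fun i => Real.logb 2 (t i)) := by
    rw [hi0]
    apply le_antisymm
    · exact Finset.le_sup' (fun i => Real.logb 2 (t i)) (mem_univ i0)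
    · apply Finset.sup'_le
      intro j _
      exact Real.logb_le_logb_of_le (by norm_num) (htpos j) (hi0 ▸ Finset.le_sup' t (mem_univ j))
  -- Step 6: pull out the constant
  have hconst : univ.sup' hne (fun i => Real.logb 2 (t i))
      = univ.sup' hne (fun i => ((lam i).length : ℝ) - Real.logb 2 (1 / p i)) - l := by
    rw [Finset.sup'_congr hne rfl (fun i _ => hlogt i)]
    obtain ⟨j, _, hj⟩ := Finset.exists_mem_eq_sup' hne
      (fun i : Fin L => ((lam i).length : ℝ) - Real.logb 2 (1 / p i))
    apply le_antisymm
    · apply Finset.sup'_le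
      intro k _
      have := Finset.le_sup' (fun i : Fin L => ((lam i).length : ℝ) - Real.logb 2 (1 / p i))
        (mem_univ k)
      linarith
    · rw [hj]
      have := Finset.le_sup'
        (fun i : Fin L => ((lam i).length : ℝ) - Real.logb 2 (1 / p i) - l) (mem_univ j)
      linarith
  unfold minEntropy
  rw [hsup, hlogsup, hconst]
  have hpi : univ.sup' (⟨⟨0, hL⟩, Finset.mem_univ _⟩ : (univ : Finset (Fin L)).Nonempty)
      (fun i : Fin L => ((lam i).length : ℝ) - Real.logb 2 (1 / p i))
      = univ.sup' hne (fun i : Fin L => ((lam i).length : ℝ) - Real.logb 2 (1 / p i)) := rfl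
  rw [hpi]
  ring
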